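/- Define F(t_1, t_2) = √(tanh²t_1 + tanh²t_2) + exp(−log cosh t_1 − log cosh t_2 − √(t_1² + t_2²)) − 1 for t_1, t_2 ≥ 0. Then F(t_1, t_2) ≥ 0 for all t_1, t_2 ≥ 0, with F(0,0) = 0. -/

import Mathlib

open Real

lemma sinh_le_mul_cosh {t : ℝ} (ht : 0 ≤ t) : Real.sinh t ≤ t * Real.cosh t := by
  have h : MonotoneOn (fun u : ℝ => u * Real.cosh u - Real.sinh u) (Set.Ici 0) := by
    apply monotoneOn_of_deriv_nonneg (convex_Ici 0)
    · fun_prop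
    · fun_prop
    · intro u hu
      simp only [interior_Ici, Set.mem_Ioi] at hu
      have : deriv (fun u : ℝ => u * Real.cosh u - Real.sinh u) u = u * Real.sinh u := by
        rw [deriv_fun_sub (by fun_prop) (by fun_prop), deriv_fun_mul (by fun_prop) (by fun_prop)]
        simp [Real.deriv_cosh, Real.deriv_sinh]
      rw [this]
      exact mul_nonneg hu.le (Real.sinh_nonneg_iff.2 hu.le)
  have := h (Set.self_mem_Ici) (Set.mem_Ici.2 ht) ht
  simpa using this

lemma tanh_le_self' {t : ℝ} (ht : 0 ≤ t) : Real.tanh t ≤ t := by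
  rw [Real.tanh_eq_sinh_div_cosh, div_le_iff₀ (Real.cosh_pos t)]
  exact sinh_le_mul_cosh ht

lemma one_sub_tanh_eq (t : ℝ) : 1 - Real.tanh t = Real.exp (-t) / Real.cosh t := by
  rw [Real.tanh_eq_sinh_div_cosh, eq_div_iff (Real.cosh_pos t).ne', sub_mul, div_mul_cancel₀]
  · rw [← Real.cosh_sub_sinh t]; ring
  · exact (Real.cosh_pos t).ne'

lemma tanh_nonneg' {t : ℝ} (ht : 0 ≤ t) : 0 ≤ Real.tanh t := by
  rw [Real.tanh_eq_sinh_div_cosh]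
  exact div_nonneg (Real.sinh_nonneg_iff.2 ht) (Real.cosh_pos t).le

lemma tanh_le_one' (t : ℝ) : Real.tanh t ≤ 1 := by
  have h := one_sub_tanh_eq t
  nlinarith [div_nonneg (Real.exp_nonneg (-t)) (Real.cosh_pos t).le]

lemma exp_neg_log_cosh (t : ℝ) :
    Real.exp (-Real.log (Real.cosh t) - t) = 1 - Real.tanh t := by
  have h : -Real.log (Real.cosh t) - t = (-t) - Real.log (Real.cosh t) := by ring
  rw [h, Real.exp_sub, Real.exp_log (Real.cosh_pos t), ← one_sub_tanh_eq]

lemma delta_mono {x y a b : ℝ} (hx0 : 0 ≤ x) (hy0 : 0 ≤ y) (hxa : x ≤ a) (hyb : y ≤ b) :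
    x + y - Real.sqrt (x^2 + y^2) ≤ a + b - Real.sqrt (a^2 + b^2) := by
  set s := Real.sqrt (x^2 + y^2) with hsdef
  have hs0 : 0 ≤ s := Real.sqrt_nonneg _
  have hs : s^2 = x^2 + y^2 := Real.sq_sqrt (by positivity)
  have hsx : x ≤ s := by nlinarith [sq_nonneg (s - x)]
  have hsy : y ≤ s := by nlinarith [sq_nonneg (s - y)]
  have hd : Real.sqrt (a^2 + b^2) ≤ s + (a - x) + (b - y) := by
    have h1 : a^2 + b^2 ≤ (s + (a - x) + (b - y))^2 := by
      nlinarith [mul_nonneg (sub_nonneg.2 hxa) (sub_nonneg.2 hyb),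
        mul_nonneg (sub_nonneg.2 hxa) hs0, mul_nonneg (sub_nonneg.2 hyb) hs0]
    calc Real.sqrt (a^2 + b^2) ≤ Real.sqrt ((s + (a - x) + (b - y))^2) :=
          Real.sqrt_le_sqrt h1
      _ = s + (a - x) + (b - y) := Real.sqrt_sq (by linarith)
  linarith

lemma key_poly (x y s : ℝ) (hx0 : 0 ≤ x) (hy0 : 0 ≤ y)
    (hs : s^2 = x^2 + y^2) (hs0 : 0 ≤ s) (hsx : x ≤ s) (hsy : y ≤ s) (hsp : s ≤ x + y) :
    1 ≤ s + (1-x)*(1-y)*(1 + (x+y-s) + (x+y-s)^2/2) := by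
  nlinarith [mul_nonneg hx0 hy0, mul_nonneg (mul_nonneg hx0 hy0) hs0, sq_nonneg (x+y-s),
    mul_nonneg (mul_nonneg hx0 hy0) (sub_nonneg.2 hsp),
    mul_nonneg (mul_nonneg (mul_nonneg hx0 hy0) hy0) hx0,
    mul_nonneg (mul_nonneg hx0 hy0) (mul_nonneg hx0 hy0),
    sq_nonneg (x*y), sq_nonneg (x+y), sq_nonneg (x-y)]

theorem F_nonneg :
    (∀ t₁ t₂ : ℝ, 0 ≤ t₁ → 0 ≤ t₂ →
      Real.sqrt (Real.tanh t₁ ^ 2 + Real.tanh t₂ ^ 2) +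
        Real.exp (-Real.log (Real.cosh t₁) - Real.log (Real.cosh t₂)
          - Real.sqrt (t₁^2 + t₂^2)) - 1 ≥ 0) ∧
    Real.sqrt (Real.tanh 0 ^ 2 + Real.tanh 0 ^ 2) +
        Real.exp (-Real.log (Real.cosh 0) - Real.log (Real.cosh 0)
          - Real.sqrt (0^2 + 0^2)) - 1 = 0 := by
  constructor
  · intro t₁ t₂ h₁ h₂
    set x := Real.tanh t₁ with hxdef
    set y := Real.tanh t₂ with hydef
    set r := Real.sqrt (t₁^2 + t₂^2) with hrdef
    set s := Real.sqrt (x^2 + y^2) with hsdef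
    have hx0 : 0 ≤ x := tanh_nonneg' h₁
    have hy0 : 0 ≤ y := tanh_nonneg' h₂
    have hx1 : x ≤ 1 := tanh_le_one' t₁
    have hy1 : y ≤ 1 := tanh_le_one' t₂
    have hs0 : 0 ≤ s := Real.sqrt_nonneg _
    have hs : s^2 = x^2 + y^2 := Real.sq_sqrt (by positivity)
    have hsx : x ≤ s := by nlinarith [sq_nonneg (s - x)]
    have hsy : y ≤ s := by nlinarith [sq_nonneg (s - y)]
    have hsp : s ≤ x + y := by
      calc s ≤ Real.sqrt ((x+y)^2) := Real.sqrt_le_sqrt (by nlinarith [mul_nonneg hx0 hy0])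
        _ = x + y := Real.sqrt_sq (by linarith)
    -- rewrite the exponential
    have hE : Real.exp (-Real.log (Real.cosh t₁) - Real.log (Real.cosh t₂) - r)
        = (1 - x) * (1 - y) * Real.exp (t₁ + t₂ - r) := by
      rw [← exp_neg_log_cosh t₁, ← exp_neg_log_cosh t₂, ← Real.exp_add, ← Real.exp_add]
      ring_nf
    have hδ : x + y - s ≤ t₁ + t₂ - r :=
      delta_mono hx0 hy0 (tanh_le_self' h₁) (tanh_le_self' h₂)
    have hquad : 1 + (x+y-s) + (x+y-s)^2/2 ≤ Real.exp (t₁ + t₂ - r) :=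
      le_trans (Real.quadratic_le_exp_of_nonneg (by linarith)) (Real.exp_le_exp.2 hδ)
    have hfac : 0 ≤ (1 - x) * (1 - y) :=
      mul_nonneg (by linarith) (by linarith)
    have hmul : (1 - x) * (1 - y) * (1 + (x+y-s) + (x+y-s)^2/2)
        ≤ (1 - x) * (1 - y) * Real.exp (t₁ + t₂ - r) :=
      mul_le_mul_of_nonneg_left hquad hfac
    have hkey := key_poly x y s hx0 hy0 hs hs0 hsx hsy hsp
    rw [ge_iff_le, sub_nonneg, hE]
    calc (1:ℝ) ≤ s + (1-x)*(1-y)*(1 + (x+y-s) + (x+y-s)^2/2) := hkey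
      _ ≤ s + (1-x)*(1-y)*Real.exp (t₁ + t₂ - r) := by linarith
  · simp [Real.tanh_zero, Real.cosh_zero]
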